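/- Let R be a commutative ring with identity, M a Noetherian R-module, and N a proper submodule of M. If N is a 2-irreducible submodule of M, then either N is an irreducible submodule of M, or there exist irreducible submodules N₁ and N₂ of M with N = N₁ ∩ N₂. -/
import Mathlib

def Is2Irreducible {R M : Type*} [CommRing R] [AddCommGroup M] [Module R M]
    (N : Submodule R M) : Prop :=
  ∀ H₁ H₂ H₃ : Submodule R M, N = H₁ ⊓ H₂ ⊓ H₃ →
    N = H₁ ⊓ H₂ ∨ N = H₁ ⊓ H₃ ∨ N = H₂ ⊓ H₃

def IsIrreducibleSubmodule {R M : Type*} [CommRing R] [AddCommGroup M] [Module R M]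
    (N : Submodule R M) : Prop :=
  N ≠ ⊤ ∧ ∀ H₁ H₂ : Submodule R M, N = H₁ ⊓ H₂ → N = H₁ ∨ N = H₂

private lemma foldr_inf_eq {R M : Type*} [CommRing R] [AddCommGroup M] [Module R M]
    (l : List (Submodule R M)) (x : Submodule R M) :
    l.foldr (· ⊓ ·) x = l.foldr (· ⊓ ·) ⊤ ⊓ x := by
  induction l with
  | nil => simp
  | cons a t ih => simp [List.foldr_cons, ih, inf_assoc]

private lemma decompose {R M : Type*} [CommRing R] [AddCommGroup M] [Module R M]
    [IsNoetherian R M] (N : Submodule R M) (hN : N ≠ ⊤) :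
    ∃ l : List (Submodule R M), l ≠ [] ∧ (∀ P ∈ l, IsIrreducibleSubmodule P) ∧
      N = l.foldr (· ⊓ ·) ⊤ := by
  induction N using IsNoetherian.induction with
  | _ N IH =>
  by_cases hirr : ∀ H₁ H₂ : Submodule R M, N = H₁ ⊓ H₂ → N = H₁ ∨ N = H₂
  · exact ⟨[N], by simp, by simpa [IsIrreducibleSubmodule] using ⟨hN, hirr⟩, by simp⟩
  · push_neg at hirr
    obtain ⟨H₁, H₂, heq, hne₁, hne₂⟩ := hirr
    have h₁lt : N < H₁ := lt_of_le_of_ne (heq ▸ inf_le_left) hne₁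
    have h₂lt : N < H₂ := lt_of_le_of_ne (heq ▸ inf_le_right) hne₂
    have h₁top : H₁ ≠ ⊤ := by rintro rfl; exact hne₂ (by simpa using heq)
    have h₂top : H₂ ≠ ⊤ := by rintro rfl; exact hne₁ (by simpa using heq)
    obtain ⟨l₁, hl₁ne, hl₁irr, hl₁eq⟩ := IH H₁ h₁lt h₁top
    obtain ⟨l₂, hl₂ne, hl₂irr, hl₂eq⟩ := IH H₂ h₂lt h₂top
    refine ⟨l₁ ++ l₂, by simp [hl₁ne], ?_, ?_⟩
    · intro P hP
      rcases List.mem_append.mp hP with h | h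
      · exact hl₁irr P h
      · exact hl₂irr P h
    · rw [List.foldr_append, foldr_inf_eq, ← hl₁eq, ← hl₂eq, heq]

private lemma reduce {R M : Type*} [CommRing R] [AddCommGroup M] [Module R M]
    (N : Submodule R M) (h2 : Is2Irreducible N) :
    ∀ l : List (Submodule R M), l ≠ [] → (∀ P ∈ l, IsIrreducibleSubmodule P) →
      N = l.foldr (· ⊓ ·) ⊤ →
      IsIrreducibleSubmodule N ∨
        ∃ N₁ N₂ : Submodule R M, IsIrreducibleSubmodule N₁ ∧
          IsIrreducibleSubmodule N₂ ∧ N = N₁ ⊓ N₂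
  | [], hne, _, _ => absurd rfl hne
  | [a], _, hirr, heq => by
    left
    have : N = a := by simpa using heq
    exact this ▸ hirr a (by simp)
  | [a, b], _, hirr, heq => by
    right
    exact ⟨a, b, hirr a (by simp), hirr b (by simp), by simpa using heq⟩
  | a :: b :: c :: t, _, hirr, heq => by
    have heq' : N = a ⊓ b ⊓ (c :: t).foldr (· ⊓ ·) ⊤ := by
      simpa [inf_assoc] using heq
    rcases h2 a b _ heq' with h | h | h
    · exact Or.inr ⟨a, b, hirr a (by simp), hirr b (by simp), h⟩
    · exact reduce N h2 (a :: c :: t) (by simp)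
        (by intro P hP; apply hirr; simp at hP ⊢; tauto) (by simpa using h)
    · exact reduce N h2 (b :: c :: t) (by simp)
        (by intro P hP; apply hirr; simp at hP ⊢; tauto) (by simpa using h)
  termination_by l => l.length

theorem stmt_0 {R M : Type*} [CommRing R] [AddCommGroup M] [Module R M]
    [IsNoetherian R M] (N : Submodule R M) (hN : N ≠ ⊤)
    (h2 : Is2Irreducible N) :
    IsIrreducibleSubmodule N ∨
      ∃ N₁ N₂ : Submodule R M, IsIrreducibleSubmodule N₁ ∧
        IsIrreducibleSubmodule N₂ ∧ N = N₁ ⊓ N₂ := by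
  obtain ⟨l, hne, hirr, heq⟩ := decompose N hN
  exact reduce N h2 l hne hirr heq
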